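/- Let S₃ act on ℂ[s,t]: identify (s,t) with the pair (u,u) ∈ ℂ²×ℂ² fixed by the transposition in the S₃-action of the previous setting. The image under the invariant map (u,v) ↦ (u⊗v, u^{⊗3}+v^{⊗3}) of the diagonal locus {(u,u) : u ∈ ℂ²} has coordinate ring isomorphic to the subring ℂ[s², st, t², s³, s²t, st², t³] of ℂ[s,t], i.e., to the ring of polynomials in s,t with no linear term. In particular this ring is not normal (not integrally closed), since s and t lie in its fraction field and are integral over it but not in the ring. -/

import Mathlib

open MvPolynomial

private lemma aux_coeff_single_one_mul (i : Fin 2) (p q : MvPolynomial (Fin 2) ℂ) :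
    coeff (Finsupp.single i 1) (p * q) =
      coeff 0 p * coeff (Finsupp.single i 1) q + coeff (Finsupp.single i 1) p * coeff 0 q := by
  rw [coeff_mul, Finsupp.antidiagonal_single, Finset.sum_map]
  have : Finset.HasAntidiagonal.antidiagonal (1 : ℕ) = ({(0,1),(1,0)} : Finset (ℕ × ℕ)) := by decide
  rw [this, Finset.sum_insert (by decide), Finset.sum_singleton]
  simp

private lemma aux_lin_coeff_pow (i : Fin 2) (a b : ℕ) (h : 2 ≤ a + b) :
    coeff (Finsupp.single i 1) (X 0 ^ a * X 1 ^ b : MvPolynomial (Fin 2) ℂ) = 0 := by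
  have e : (X 0 ^ a * X 1 ^ b : MvPolynomial (Fin 2) ℂ)
      = monomial (Finsupp.single 0 a + Finsupp.single 1 b) 1 := by
    rw [X_pow_eq_monomial, X_pow_eq_monomial, monomial_mul, one_mul]
  rw [e, coeff_monomial, if_neg]
  intro hv
  have h0 := DFunLike.congr_fun hv 0
  have h1 := DFunLike.congr_fun hv 1
  fin_cases i <;> simp [Finsupp.single_apply] at h0 h1 <;> omega

/-- Polynomials with no linear term, as a subalgebra. -/
noncomputable def Tsub : Subalgebra ℂ (MvPolynomial (Fin 2) ℂ) where
  carrier := {p | coeff (Finsupp.single 0 1) p = 0 ∧ coeff (Finsupp.single 1 1) p = 0}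
  add_mem' := by rintro p q ⟨h1, h2⟩ ⟨h3, h4⟩; constructor <;> simp [coeff_add, h1, h2, h3, h4]
  mul_mem' := by
    rintro p q ⟨h1, h2⟩ ⟨h3, h4⟩
    constructor <;> rw [aux_coeff_single_one_mul] <;> simp [h1, h2, h3, h4]
  algebraMap_mem' := by
    intro r
    refine ⟨?_, ?_⟩
    · simp only [algebraMap_eq, coeff_C]
      rw [if_neg]
      intro h
      simpa using (DFunLike.congr_fun h 0).symm
    · simp only [algebraMap_eq, coeff_C]
      rw [if_neg]
      intro h
      simpa using (DFunLike.congr_fun h 1).symm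

/-- The adjoin subalgebra from the statement. -/
def gset : Set (MvPolynomial (Fin 2) ℂ) :=
  {X 0 * X 0, X 0 * X 1, X 1 * X 0, X 1 * X 1,
    2 * X 0 ^ 3, 2 * X 0 ^ 2 * X 1, 2 * X 0 * X 1 ^ 2, 2 * X 1 ^ 3}

private lemma mem_gset {p : MvPolynomial (Fin 2) ℂ}
    (h : p = X 0 * X 0 ∨ p = X 0 * X 1 ∨ p = X 1 * X 0 ∨ p = X 1 * X 1 ∨
      p = 2 * X 0 ^ 3 ∨ p = 2 * X 0 ^ 2 * X 1 ∨ p = 2 * X 0 * X 1 ^ 2 ∨ p = 2 * X 1 ^ 3) :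
    p ∈ gset := by
  simp only [gset, Set.mem_insert_iff, Set.mem_singleton_iff]
  tauto

noncomputable def genA : Subalgebra ℂ (MvPolynomial (Fin 2) ℂ) :=
  Algebra.adjoin ℂ gset

private lemma two_eq_C : (2 : MvPolynomial (Fin 2) ℂ) = C 2 :=
  (map_ofNat C 2).symm

private lemma half_smul (p : MvPolynomial (Fin 2) ℂ) : ((2:ℂ)⁻¹) • (2 * p) = p := by
  rw [smul_eq_C_mul, two_eq_C, ← mul_assoc, ← C_mul]
  norm_num

private lemma q20 : (X 0 ^ 2 : MvPolynomial (Fin 2) ℂ) ∈ genA := by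
  have h := Algebra.subset_adjoin (R := ℂ) (mem_gset (Or.inl rfl))
  rwa [show (X 0 * X 0 : MvPolynomial (Fin 2) ℂ) = X 0 ^ 2 by ring] at h

private lemma q11 : (X 0 * X 1 : MvPolynomial (Fin 2) ℂ) ∈ genA :=
  Algebra.subset_adjoin (mem_gset (Or.inr (Or.inl rfl)))

private lemma q02 : (X 1 ^ 2 : MvPolynomial (Fin 2) ℂ) ∈ genA := by
  have h := Algebra.subset_adjoin (R := ℂ) (mem_gset (Or.inr (Or.inr (Or.inr (Or.inl rfl)))))
  rwa [show (X 1 * X 1 : MvPolynomial (Fin 2) ℂ) = X 1 ^ 2 by ring] at h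

private lemma c30 : (X 0 ^ 3 : MvPolynomial (Fin 2) ℂ) ∈ genA := by
  have h := genA.smul_mem (Algebra.subset_adjoin (R := ℂ)
    (mem_gset (Or.inr (Or.inr (Or.inr (Or.inr (Or.inl rfl))))))) ((2:ℂ)⁻¹)
  rwa [half_smul] at h

private lemma c21 : (X 0 ^ 2 * X 1 : MvPolynomial (Fin 2) ℂ) ∈ genA := by
  have h := genA.smul_mem (Algebra.subset_adjoin (R := ℂ)
    (mem_gset (Or.inr (Or.inr (Or.inr (Or.inr (Or.inr (Or.inl rfl)))))))) ((2:ℂ)⁻¹)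
  rwa [show (2 * X 0 ^ 2 * X 1 : MvPolynomial (Fin 2) ℂ) = 2 * (X 0 ^ 2 * X 1) by ring,
    half_smul] at h

private lemma c12 : (X 0 * X 1 ^ 2 : MvPolynomial (Fin 2) ℂ) ∈ genA := by
  have h := genA.smul_mem (Algebra.subset_adjoin (R := ℂ)
    (mem_gset (Or.inr (Or.inr (Or.inr (Or.inr (Or.inr (Or.inr (Or.inl rfl))))))))) ((2:ℂ)⁻¹)
  rwa [show (2 * X 0 * X 1 ^ 2 : MvPolynomial (Fin 2) ℂ) = 2 * (X 0 * X 1 ^ 2) by ring,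
    half_smul] at h

private lemma c03 : (X 1 ^ 3 : MvPolynomial (Fin 2) ℂ) ∈ genA := by
  have h := genA.smul_mem (Algebra.subset_adjoin (R := ℂ)
    (mem_gset (Or.inr (Or.inr (Or.inr (Or.inr (Or.inr (Or.inr (Or.inr rfl))))))))) ((2:ℂ)⁻¹)
  rwa [half_smul] at h

private lemma mon_memA : ∀ n a b : ℕ, a + b = n → 2 ≤ n →
    (X 0 : MvPolynomial (Fin 2) ℂ) ^ a * X 1 ^ b ∈ genA := by
  intro n
  induction n using Nat.strong_induction_on with
  | _ n ih =>
    intro a b hab h2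
    rcases Nat.lt_or_ge n 4 with h4 | h4
    · have ha : a ≤ 3 := by omega
      have hb : b ≤ 3 := by omega
      interval_cases a <;> interval_cases b <;>
        first
          | omega
          | (simp only [pow_zero, pow_one, one_mul, mul_one]
             first
               | with_reducible exact q20 | with_reducible exact q11 | with_reducible exact q02
               | with_reducible exact c30 | with_reducible exact c21 | with_reducible exact c12 | with_reducible exact c03)
    · rcases le_or_gt 2 a with ha | ha
      · obtain ⟨a', rfl⟩ : ∃ a', a = a' + 2 := ⟨a - 2, by omega⟩
        rw [show (X 0 : MvPolynomial (Fin 2) ℂ) ^ (a' + 2) * X 1 ^ b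
          = X 0 ^ 2 * (X 0 ^ a' * X 1 ^ b) by ring]
        exact mul_mem q20 (ih (a' + b) (by omega) a' b rfl (by omega))
      · obtain ⟨b', rfl⟩ : ∃ b', b = b' + 2 := ⟨b - 2, by omega⟩
        rw [show (X 0 : MvPolynomial (Fin 2) ℂ) ^ a * X 1 ^ (b' + 2)
          = X 1 ^ 2 * (X 0 ^ a * X 1 ^ b') by ring]
        exact mul_mem q02 (ih (a + b') (by omega) a b' rfl (by omega))

private lemma TleA : Tsub ≤ genA := by
  intro p hp
  obtain ⟨h0, h1⟩ := hp
  rw [p.as_sum]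
  apply Subalgebra.sum_mem
  intro v hv
  have hv' : coeff v p ≠ 0 := mem_support_iff.mp hv
  have hv2 : v = Finsupp.single 0 (v 0) + Finsupp.single 1 (v 1) := by
    ext i
    fin_cases i <;> simp [Finsupp.single_apply]
  have hmon : (monomial v) (coeff v p) = (coeff v p) • ((X 0 : MvPolynomial (Fin 2) ℂ) ^ (v 0) * X 1 ^ (v 1)) := by
    rw [smul_eq_C_mul, X_pow_eq_monomial, X_pow_eq_monomial, monomial_mul, one_mul,
      C_mul_monomial, mul_one, ← hv2]
  rcases Nat.lt_or_ge (v 0 + v 1) 2 with hd | hd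
  · rcases Nat.lt_or_ge (v 0 + v 1) 1 with hd0 | hd1
    · -- v = 0
      have h00 : v 0 = 0 := by omega
      have h11 : v 1 = 0 := by omega
      have hv0 : v = 0 := by
        ext i; fin_cases i <;> simp [h00, h11]
      rw [hv0, monomial_zero']
      exact genA.algebraMap_mem _
    · -- degree 1 : contradiction
      exfalso
      rcases Nat.lt_or_ge (v 0) 1 with h00 | h00
      · have e0 : v 0 = 0 := by omega
        have e1 : v 1 = 1 := by omega
        have : v = Finsupp.single 1 1 := by
          ext i; fin_cases i <;> simp [Finsupp.single_apply, e0, e1]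
        exact hv' (this ▸ h1)
      · have e0 : v 0 = 1 := by omega
        have e1 : v 1 = 0 := by omega
        have : v = Finsupp.single 0 1 := by
          ext i; fin_cases i <;> simp [Finsupp.single_apply, e0, e1]
        exact hv' (this ▸ h0)
  · rw [hmon]
    exact genA.smul_mem (mon_memA (v 0 + v 1) (v 0) (v 1) rfl hd) _

set_option maxHeartbeats 1000000 in
private lemma AleT : genA ≤ Tsub := by
  rw [genA, Algebra.adjoin_le_iff]
  intro p hp
  have pow_mem : ∀ a b : ℕ, 2 ≤ a + b → ((X 0 : MvPolynomial (Fin 2) ℂ) ^ a * X 1 ^ b) ∈ Tsub :=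
    fun a b h => ⟨aux_lin_coeff_pow 0 a b h, aux_lin_coeff_pow 1 a b h⟩
  have two_mem : (2 : MvPolynomial (Fin 2) ℂ) ∈ Tsub := by
    have := Tsub.algebraMap_mem (2 : ℂ)
    simpa [algebraMap_eq, ← two_eq_C] using this
  simp only [gset, Set.mem_insert_iff, Set.mem_singleton_iff] at hp
  rcases hp with h|h|h|h|h|h|h|h <;> subst h
  · exact (show (X 0 * X 0 : MvPolynomial (Fin 2) ℂ) = X 0 ^ 2 * X 1 ^ 0 by ring) ▸
      pow_mem 2 0 (by norm_num)
  · exact (show (X 0 * X 1 : MvPolynomial (Fin 2) ℂ) = X 0 ^ 1 * X 1 ^ 1 by ring) ▸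
      pow_mem 1 1 (by norm_num)
  · exact (show (X 1 * X 0 : MvPolynomial (Fin 2) ℂ) = X 0 ^ 1 * X 1 ^ 1 by ring) ▸
      pow_mem 1 1 (by norm_num)
  · exact (show (X 1 * X 1 : MvPolynomial (Fin 2) ℂ) = X 0 ^ 0 * X 1 ^ 2 by ring) ▸
      pow_mem 0 2 (by norm_num)
  · rw [show (2 * X 0 ^ 3 : MvPolynomial (Fin 2) ℂ) = 2 * (X 0 ^ 3 * X 1 ^ 0) by ring]
    exact mul_mem two_mem (pow_mem 3 0 (by norm_num))
  · rw [show (2 * X 0 ^ 2 * X 1 : MvPolynomial (Fin 2) ℂ) = 2 * (X 0 ^ 2 * X 1 ^ 1) by ring]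
    exact mul_mem two_mem (pow_mem 2 1 (by norm_num))
  · rw [show (2 * X 0 * X 1 ^ 2 : MvPolynomial (Fin 2) ℂ) = 2 * (X 0 ^ 1 * X 1 ^ 2) by ring]
    exact mul_mem two_mem (pow_mem 1 2 (by norm_num))
  · rw [show (2 * X 1 ^ 3 : MvPolynomial (Fin 2) ℂ) = 2 * (X 0 ^ 0 * X 1 ^ 3) by ring]
    exact mul_mem two_mem (pow_mem 0 3 (by norm_num))

private lemma mem_genA_iff (p : MvPolynomial (Fin 2) ℂ) :
    p ∈ genA ↔ (coeff (Finsupp.single 0 1) p = 0 ∧ coeff (Finsupp.single 1 1) p = 0) :=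
  ⟨fun h => AleT h, fun h => TleA h⟩

set_option maxHeartbeats 1000000 in
theorem stmt_8 :
    let s : MvPolynomial (Fin 2) ℂ := X 0
    let t : MvPolynomial (Fin 2) ℂ := X 1
    let R : Subalgebra ℂ (MvPolynomial (Fin 2) ℂ) :=
      Algebra.adjoin ℂ ({s * s, s * t, t * s, t * t,
        2 * s ^ 3, 2 * s ^ 2 * t, 2 * s * t ^ 2, 2 * t ^ 3} : Set (MvPolynomial (Fin 2) ℂ))
    R = Algebra.adjoin ℂ ({s ^ 2, s * t, t ^ 2, s ^ 3, s ^ 2 * t, s * t ^ 2, t ^ 3} :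
        Set (MvPolynomial (Fin 2) ℂ)) ∧
    (∀ p : MvPolynomial (Fin 2) ℂ, p ∈ R ↔
      (MvPolynomial.coeff (Finsupp.single 0 1) p = 0 ∧
       MvPolynomial.coeff (Finsupp.single 1 1) p = 0)) ∧
    IsIntegral R s ∧ IsIntegral R t ∧ s ∉ R ∧ t ∉ R ∧
    (∃ a ∈ R, ∃ b ∈ R, b ≠ 0 ∧ s * b = a) ∧
    (∃ a ∈ R, ∃ b ∈ R, b ≠ 0 ∧ t * b = a) := by
  intro s t R
  have hR : R = genA := rfl
  have hiff : ∀ p : MvPolynomial (Fin 2) ℂ, p ∈ R ↔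
      (coeff (Finsupp.single 0 1) p = 0 ∧ coeff (Finsupp.single 1 1) p = 0) := by
    intro p; rw [hR]; exact mem_genA_iff p
  have hs2 : s ^ 2 ∈ R := hR ▸ q20
  have hs3 : s ^ 3 ∈ R := hR ▸ c30
  have ht2 : t ^ 2 ∈ R := hR ▸ q02
  have ht3 : t ^ 3 ∈ R := hR ▸ c03
  refine ⟨?_, hiff, ?_, ?_, ?_, ?_, ?_, ?_⟩
  · -- adjoin equality
    apply le_antisymm
    · rw [show R = Algebra.adjoin ℂ gset from hR, Algebra.adjoin_le_iff]
      intro p hp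
      have pow2 : (s ^ 2 : MvPolynomial (Fin 2) ℂ) ∈ Algebra.adjoin ℂ
          ({s ^ 2, s * t, t ^ 2, s ^ 3, s ^ 2 * t, s * t ^ 2, t ^ 3} :
            Set (MvPolynomial (Fin 2) ℂ)) := Algebra.subset_adjoin (by left; rfl)
      have two_mem : (2 : MvPolynomial (Fin 2) ℂ) ∈ Algebra.adjoin ℂ
          ({s ^ 2, s * t, t ^ 2, s ^ 3, s ^ 2 * t, s * t ^ 2, t ^ 3} :
            Set (MvPolynomial (Fin 2) ℂ)) := by
        have := Subalgebra.algebraMap_mem (Algebra.adjoin ℂ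
          ({s ^ 2, s * t, t ^ 2, s ^ 3, s ^ 2 * t, s * t ^ 2, t ^ 3} :
            Set (MvPolynomial (Fin 2) ℂ))) (2 : ℂ)
        simpa [algebraMap_eq, ← two_eq_C] using this
      simp only [gset, Set.mem_insert_iff, Set.mem_singleton_iff] at hp
      rcases hp with h|h|h|h|h|h|h|h <;> subst h
      · exact (show (s * s : MvPolynomial (Fin 2) ℂ) = s ^ 2 by ring) ▸ pow2
      · exact Algebra.subset_adjoin (by right; left; rfl)
      · exact (show (t * s : MvPolynomial (Fin 2) ℂ) = s * t by ring) ▸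
          Algebra.subset_adjoin (by right; left; rfl)
      · exact (show (t * t : MvPolynomial (Fin 2) ℂ) = t ^ 2 by ring) ▸
          Algebra.subset_adjoin (by right; right; left; rfl)
      · exact mul_mem two_mem (Algebra.subset_adjoin (by right; right; right; left; rfl))
      · exact (show (2 * s ^ 2 * t : MvPolynomial (Fin 2) ℂ) = 2 * (s ^ 2 * t) by ring) ▸
          mul_mem two_mem
            (Algebra.subset_adjoin (by right; right; right; right; left; rfl))
      · exact (show (2 * s * t ^ 2 : MvPolynomial (Fin 2) ℂ) = 2 * (s * t ^ 2) by ring) ▸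
          mul_mem two_mem
            (Algebra.subset_adjoin (by right; right; right; right; right; left; rfl))
      · exact mul_mem two_mem
          (Algebra.subset_adjoin (by right; right; right; right; right; right; rfl))
    · rw [Algebra.adjoin_le_iff]
      intro p hp
      simp only [Set.mem_insert_iff, Set.mem_singleton_iff] at hp
      rcases hp with h|h|h|h|h|h|h <;> subst h
      · exact hs2
      · exact hR ▸ q11
      · exact ht2
      · exact hs3
      · exact hR ▸ c21
      · exact hR ▸ c12
      · exact ht3
  · -- IsIntegral R s
    refine ⟨Polynomial.X ^ 2 - Polynomial.C (⟨s ^ 2, hs2⟩ : R), ?_, ?_⟩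
    · exact Polynomial.monic_X_pow_sub_C _ (by norm_num)
    · simp [Polynomial.eval₂_sub, Polynomial.eval₂_pow]
  · -- IsIntegral R t
    refine ⟨Polynomial.X ^ 2 - Polynomial.C (⟨t ^ 2, ht2⟩ : R), ?_, ?_⟩
    · exact Polynomial.monic_X_pow_sub_C _ (by norm_num)
    · simp [Polynomial.eval₂_sub, Polynomial.eval₂_pow]
  · -- s ∉ R
    intro h
    have h1 : coeff (Finsupp.single 0 1) (X 0 : MvPolynomial (Fin 2) ℂ) = 0 := ((hiff s).mp h).1
    rw [coeff_X] at h1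
    simp at h1
  · -- t ∉ R
    intro h
    have h1 : coeff (Finsupp.single 1 1) (X 1 : MvPolynomial (Fin 2) ℂ) = 0 := ((hiff t).mp h).2
    rw [coeff_X] at h1
    simp at h1
  · exact ⟨s ^ 3, hs3, s ^ 2, hs2, pow_ne_zero _ (X_ne_zero 0), by ring⟩
  · exact ⟨t ^ 3, ht3, t ^ 2, ht2, pow_ne_zero _ (X_ne_zero 1), by ring⟩
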